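/- Every infinitely divisible element of Bd(ℤ) (bounded displacement permutations of ℤ) is torsion. -/

import Mathlib

open Finset

private lemma exists_flip (f : ℕ → Bool) : ∀ m, f 0 ≠ f m → ∃ j, j < m ∧ f j ≠ f (j+1) := by
  intro m
  induction m with
  | zero => intro h; exact absurd rfl h
  | succ k ih =>
    intro hne
    by_cases hk : f 0 = f k
    · exact ⟨k, Nat.lt_succ_self k, fun he => hne (hk.trans he)⟩
    · obtain ⟨j, hj, hjf⟩ := ih hk
      exact ⟨j, hj.trans (Nat.lt_succ_self k), hjf⟩

private lemma exists_median (p : ℕ → ℤ) (M a : ℕ)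
    (inj : ∀ i j, i < M → j < M → p i = p j → i = j)
    (ha0 : 0 < a) (haM : a ≤ M) :
    ∃ y : ℤ, ((range M).filter (fun i => p i ≤ y)).card = a := by
  classical
  have hM : 0 < M := lt_of_lt_of_le ha0 haM
  set F : ℤ → ℕ := fun y => ((range M).filter (fun i => p i ≤ y)).card with hF
  have hmono : ∀ y y' : ℤ, y ≤ y' → F y ≤ F y' := by
    intro y y' hyy'
    apply Finset.card_le_card
    intro i hi
    simp only [Finset.mem_filter] at *
    exact ⟨hi.1, hi.2.trans hyy'⟩
  have hstep : ∀ y : ℤ, F (y+1) ≤ F y + 1 := by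
    intro y
    have hsub : (range M).filter (fun i => p i ≤ y + 1) ⊆
        ((range M).filter (fun i => p i ≤ y)) ∪ ((range M).filter (fun i => p i = y + 1)) := by
      intro i hi
      simp only [Finset.mem_filter, Finset.mem_union] at *
      rcases lt_or_eq_of_le hi.2 with h | h
      · exact Or.inl ⟨hi.1, by omega⟩
      · exact Or.inr ⟨hi.1, h⟩
    have h1 : ((range M).filter (fun i => p i = y + 1)).card ≤ 1 := by
      apply Finset.card_le_one.mpr
      intro i hi j hj
      simp only [Finset.mem_filter, Finset.mem_range] at hi hj
      exact inj i j hi.1 hj.1 (hi.2.trans hj.2.symm)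
    calc F (y+1) ≤ (((range M).filter (fun i => p i ≤ y)) ∪ ((range M).filter (fun i => p i = y + 1))).card := Finset.card_le_card hsub
    _ ≤ F y + ((range M).filter (fun i => p i = y + 1)).card := Finset.card_union_le _ _
    _ ≤ F y + 1 := by omega
  have hne : ((range M).image p).Nonempty :=
    Finset.Nonempty.image (Finset.nonempty_range_iff.mpr (by omega)) p
  set V := (range M).image p with hV
  have hy0 : F (V.min' hne - 1) = 0 := by
    rw [hF]
    apply Finset.card_eq_zero.mpr
    apply Finset.filter_eq_empty_iff.mpr
    intro i hi hle
    have : V.min' hne ≤ p i := Finset.min'_le _ _ (Finset.mem_image_of_mem p hi)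
    omega
  have hy1 : a ≤ F (V.max' hne) := by
    have hFeq : F (V.max' hne) = M := by
      show ((range M).filter (fun i => p i ≤ V.max' hne)).card = M
      have heq : (range M).filter (fun i => p i ≤ V.max' hne) = range M := by
        apply Finset.filter_eq_self.mpr
        intro i hi
        exact Finset.le_max' _ _ (Finset.mem_image_of_mem p hi)
      rw [heq, Finset.card_range]
    omega
  obtain ⟨lb, hlb, hleast⟩ := Int.exists_least_of_bdd (P := fun z => a ≤ F z)
    ⟨V.min' hne, fun z hz => by
      by_contra hc
      push_neg at hc
      have hmo : F z ≤ F (V.min' hne - 1) := hmono _ _ (by omega)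
      omega⟩
    ⟨V.max' hne, hy1⟩
  refine ⟨lb, ?_⟩
  show F lb = a
  refine le_antisymm ?_ hlb
  have h2 : ¬ (a ≤ F (lb - 1)) := fun hp => by have := hleast _ hp; omega
  have h3 := hstep (lb - 1)
  have h4 : lb - 1 + 1 = lb := by ring
  rw [h4] at h3
  omega

private lemma core (p : ℕ → ℤ) (M n r s : ℕ) (hn : 0 < n) (hrn : 8 * r ≤ n)
    (inj : ∀ i j, i < M → j < M → p i = p j → i = j)
    (hstep1 : ∀ i, (p (i+1) - p i).natAbs ≤ s)
    (hstepn : ∀ i, (p (i+n) - p i).natAbs ≤ r) :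
    M ≤ 16 * s * n + 2 := by
  classical
  by_contra hM
  push_neg at hM
  have hsn : 0 ≤ 16 * s * n := Nat.zero_le _
  have hM3 : 3 ≤ M := by linarith
  obtain ⟨y, hy⟩ := exists_median p M (M / 2) inj (by omega) (by omega)
  set σ : ℕ → Bool := fun i => decide (p i ≤ y) with hσ
  have hσt : ∀ i, σ i = true ↔ p i ≤ y := by intro i; simp [hσ]
  have hσf : ∀ i, σ i = false ↔ ¬ (p i ≤ y) := by intro i; simp [hσ]
  -- crossing bound
  have hcross : ∀ (d t : ℕ), (∀ i, (p (i+d) - p i).natAbs ≤ t) →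
      ((range M).filter (fun i => i + d < M ∧ σ i ≠ σ (i+d))).card ≤ 2 * t := by
    intro d t hst
    set G1 := (range M).filter (fun i => p i ∈ Finset.Icc (y + 1 - (t:ℤ)) y) with hG1
    set G2 := (range M).filter (fun i => i + d < M ∧ p (i+d) ∈ Finset.Icc (y + 1 - (t:ℤ)) y) with hG2
    have hsub : (range M).filter (fun i => i + d < M ∧ σ i ≠ σ (i+d)) ⊆ G1 ∪ G2 := by
      intro i hi
      simp only [Finset.mem_filter, Finset.mem_range] at hi
      obtain ⟨hiM, hidM, hnei⟩ := hi
      have habs : |p (i+d) - p i| ≤ (t : ℤ) := by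
        have h0 := hst i
        rw [Int.abs_eq_natAbs]
        exact_mod_cast h0
      rw [abs_le] at habs
      simp only [Finset.mem_union, hG1, hG2, Finset.mem_filter, Finset.mem_range, Finset.mem_Icc]
      rcases Bool.eq_false_or_eq_true (σ i) with hsi | hsi
      · have hsid : σ (i+d) = false := by
          rcases Bool.eq_false_or_eq_true (σ (i+d)) with hh | hh
          · exact absurd (hsi.trans hh.symm) hnei
          · exact hh
        have h1 : p i ≤ y := (hσt i).mp hsi
        have h2 : ¬ (p (i+d) ≤ y) := (hσf (i+d)).mp hsid
        exact Or.inl ⟨hiM, by omega, h1⟩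
      · have hsid : σ (i+d) = true := by
          rcases Bool.eq_false_or_eq_true (σ (i+d)) with hh | hh
          · exact hh
          · exact absurd (hsi.trans hh.symm) hnei
        have h1 : ¬ (p i ≤ y) := (hσf i).mp hsi
        have h2 : p (i+d) ≤ y := (hσt (i+d)).mp hsid
        exact Or.inr ⟨hiM, hidM, ⟨by omega, h2⟩⟩
    have hIcc : (Finset.Icc (y + 1 - (t:ℤ)) y).card = t := by
      rw [Int.card_Icc]
      have : y + 1 - (y + 1 - (t:ℤ)) = (t : ℤ) := by ring
      rw [this, Int.toNat_natCast]
    have hG1c : G1.card ≤ t := by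
      rw [← hIcc]
      apply Finset.card_le_card_of_injOn p
      · intro i hi
        simp only [Finset.mem_coe, hG1, Finset.mem_filter] at hi
        exact hi.2
      · intro i hi j hj hpij
        simp only [Finset.coe_filter, Set.mem_setOf_eq, Finset.mem_range, hG1] at hi hj
        exact inj i j hi.1 hj.1 hpij
    have hG2c : G2.card ≤ t := by
      rw [← hIcc]
      apply Finset.card_le_card_of_injOn (fun i => p (i + d))
      · intro i hi
        simp only [Finset.mem_coe, hG2, Finset.mem_filter] at hi
        exact hi.2.2
      · intro i hi j hj hpij
        simp only [Finset.coe_filter, Set.mem_setOf_eq, Finset.mem_range, hG2] at hi hj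
        have := inj (i+d) (j+d) hi.2.1 hj.2.1 hpij
        omega
    calc ((range M).filter (fun i => i + d < M ∧ σ i ≠ σ (i+d))).card
        ≤ (G1 ∪ G2).card := Finset.card_le_card hsub
      _ ≤ G1.card + G2.card := Finset.card_union_le _ _
      _ ≤ 2 * t := by omega
  set X1 := (range M).filter (fun i => i + 1 < M ∧ σ i ≠ σ (i+1)) with hX1
  set Xn := (range M).filter (fun i => i + n < M ∧ σ i ≠ σ (i+n)) with hXn
  have hX1c : X1.card ≤ 2 * s := hcross 1 s hstep1
  have hXnc : Xn.card ≤ 2 * r := hcross n r hstepn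
  -- per-distance bound
  have hDc : ∀ k l c : ℕ, c = k * n + l → l < n →
      ((range M).filter (fun i => i + c < M ∧ σ i ≠ σ (i+c))).card ≤ k * (2*r) + l * (2*s) := by
    intro k l c hc hln
    set D := (range M).filter (fun i => i + c < M ∧ σ i ≠ σ (i+c)) with hD
    set Dn := (range M).filter (fun i => ∃ t, t < k ∧ i + t * n ∈ Xn) with hDn
    set D1 := (range M).filter (fun i => ∃ u, u < l ∧ i + (k * n + u) ∈ X1) with hD1
    have hcover : D ⊆ Dn ∪ D1 := by
      intro i hi
      simp only [hD, Finset.mem_filter, Finset.mem_range] at hi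
      obtain ⟨hiM, hicM, hnei⟩ := hi
      set f : ℕ → Bool := fun j => σ (i + ((min j k) * n + (j - k))) with hf
      have hf0 : f 0 = σ i := by simp [hf]
      have hfend : f (k + l) = σ (i + c) := by
        have h1 : min (k + l) k = k := min_eq_right (Nat.le_add_right k l)
        have h2 : k + l - k = l := by omega
        simp only [hf, h1, h2, hc]
      obtain ⟨j, hj, hflip⟩ := exists_flip f (k + l) (by rw [hf0, hfend]; exact hnei)
      rcases Nat.lt_or_ge j k with hjk | hjk
      · -- n-step
        have e1 : f j = σ (i + j * n) := by
          have h1 : min j k = j := min_eq_left hjk.le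
          have h2 : j - k = 0 := by omega
          simp only [hf, h1, h2, Nat.add_zero]
        have e2 : f (j+1) = σ ((i + j * n) + n) := by
          have h1 : min (j+1) k = j + 1 := min_eq_left hjk
          have h2 : j + 1 - k = 0 := by omega
          have h3 : (j+1) * n = j * n + n := by ring
          simp only [hf, h1, h2, Nat.add_zero, h3, ← Nat.add_assoc]
        have hkn : k * n + l = c := hc.symm
        have hjn : j * n + n ≤ k * n := by
          have : (j + 1) * n ≤ k * n := Nat.mul_le_mul_right n hjk
          calc j * n + n = (j+1) * n := by ring
          _ ≤ k * n := this
        apply Finset.mem_union_left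
        simp only [hDn, Finset.mem_filter, Finset.mem_range]
        refine ⟨hiM, j, hjk, ?_⟩
        simp only [hXn, Finset.mem_filter, Finset.mem_range]
        refine ⟨by omega, by omega, ?_⟩
        rw [e1, e2] at hflip
        exact hflip
      · -- 1-step
        have hul : j - k < l := by omega
        have e1 : f j = σ (i + (k * n + (j - k))) := by
          have h1 : min j k = k := min_eq_right hjk
          simp only [hf, h1]
        have e2 : f (j+1) = σ ((i + (k * n + (j - k))) + 1) := by
          have h1 : min (j+1) k = k := min_eq_right (by omega)
          have h2 : j + 1 - k = (j - k) + 1 := by omega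
          simp only [hf, h1, h2, ← Nat.add_assoc]
        apply Finset.mem_union_right
        simp only [hD1, Finset.mem_filter, Finset.mem_range]
        refine ⟨hiM, j - k, hul, ?_⟩
        simp only [hX1, Finset.mem_filter, Finset.mem_range]
        refine ⟨by omega, by omega, ?_⟩
        rw [e1, e2] at hflip
        exact hflip
    have hDnc : Dn.card ≤ k * (2 * r) := by
      have h1 : Dn.card ≤ ((range k) ×ˢ Xn).card := by
        apply Finset.card_le_card_of_injOn
          (fun i => if hx : ∃ t, t < k ∧ i + t * n ∈ Xn then (Nat.find hx, i + (Nat.find hx) * n) else (0, 0))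
        · intro i hi
          simp only [Finset.mem_coe, hDn, Finset.mem_filter] at hi
          obtain ⟨hiM, hex⟩ := hi
          dsimp only
          rw [dif_pos hex]
          obtain ⟨ht, hmem⟩ := Nat.find_spec hex
          simp only [Finset.mem_coe, Finset.mem_product, Finset.mem_range]
          exact ⟨ht, hmem⟩
        · intro i hi i' hi' heq
          simp only [Finset.mem_coe, hDn, Finset.mem_filter] at hi hi'
          dsimp only at heq
          rw [dif_pos hi.2, dif_pos hi'.2] at heq
          have e1 : Nat.find hi.2 = Nat.find hi'.2 := congrArg Prod.fst heq
          have e2 : i + Nat.find hi.2 * n = i' + Nat.find hi'.2 * n := congrArg Prod.snd heq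
          rw [e1] at e2
          exact Nat.add_right_cancel e2
      calc Dn.card ≤ ((range k) ×ˢ Xn).card := h1
      _ = k * Xn.card := by rw [Finset.card_product, Finset.card_range]
      _ ≤ k * (2 * r) := Nat.mul_le_mul_left k hXnc
    have hD1c : D1.card ≤ l * (2 * s) := by
      have h1 : D1.card ≤ ((range l) ×ˢ X1).card := by
        apply Finset.card_le_card_of_injOn
          (fun i => if hx : ∃ u, u < l ∧ i + (k * n + u) ∈ X1 then (Nat.find hx, i + (k * n + Nat.find hx)) else (0, 0))
        · intro i hi
          simp only [Finset.mem_coe, hD1, Finset.mem_filter] at hi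
          obtain ⟨hiM, hex⟩ := hi
          dsimp only
          rw [dif_pos hex]
          obtain ⟨ht, hmem⟩ := Nat.find_spec hex
          simp only [Finset.mem_coe, Finset.mem_product, Finset.mem_range]
          exact ⟨ht, hmem⟩
        · intro i hi i' hi' heq
          simp only [Finset.mem_coe, hD1, Finset.mem_filter] at hi hi'
          dsimp only at heq
          rw [dif_pos hi.2, dif_pos hi'.2] at heq
          have e1 : Nat.find hi.2 = Nat.find hi'.2 := congrArg Prod.fst heq
          have e2 : i + (k * n + Nat.find hi.2) = i' + (k * n + Nat.find hi'.2) := congrArg Prod.snd heq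
          rw [e1] at e2
          omega
      calc D1.card ≤ ((range l) ×ˢ X1).card := h1
      _ = l * X1.card := by rw [Finset.card_product, Finset.card_range]
      _ ≤ l * (2 * s) := Nat.mul_le_mul_left l hX1c
    calc D.card ≤ (Dn ∪ D1).card := Finset.card_le_card hcover
    _ ≤ Dn.card + D1.card := Finset.card_union_le _ _
    _ ≤ k * (2*r) + l * (2*s) := by omega
  -- the pair set
  set W := ((range M) ×ˢ (range M)).filter (fun q => q.1 < q.2 ∧ σ q.1 ≠ σ q.2) with hW
  set T := (range M).filter (fun i => σ i = true) with hT
  set Fa := (range M).filter (fun i => σ i = false) with hFa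
  have hTcard : T.card = M / 2 := by
    rw [hT]
    rw [Finset.filter_congr (fun i _ => (hσt i))]
    exact hy
  have hTFa : T.card + Fa.card = M := by
    rw [hT, hFa]
    have h0 := Finset.card_filter_add_card_filter_not (s := range M)
      (p := fun i => σ i = true)
    simp only [Bool.not_eq_true, Finset.card_range] at h0
    exact h0
  have hlow : T.card * Fa.card ≤ W.card := by
    rw [← Finset.card_product]
    apply Finset.card_le_card_of_injOn (fun q => if q.1 < q.2 then q else (q.2, q.1))
    · rintro ⟨i, j⟩ hq
      simp only [Finset.mem_coe, Finset.mem_product, hT, hFa, Finset.mem_filter] at hq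
      obtain ⟨⟨hiM, hiT⟩, hjM, hjF⟩ := hq
      by_cases hlt : i < j
      · simp only [if_pos hlt, hW, Finset.mem_coe, Finset.mem_filter, Finset.mem_product]
        refine ⟨⟨hiM, hjM⟩, hlt, ?_⟩
        rw [hiT, hjF]
        intro h; exact Bool.noConfusion h
      · have hij : i ≠ j := by
          intro h; rw [h] at hiT; rw [hiT] at hjF; exact Bool.noConfusion hjF
        have hlt' : j < i := by omega
        simp only [if_neg hlt, hW, Finset.mem_coe, Finset.mem_filter, Finset.mem_product]
        refine ⟨⟨hjM, hiM⟩, hlt', ?_⟩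
        rw [hiT, hjF]
        intro h; exact Bool.noConfusion h
    · rintro ⟨i, j⟩ hq ⟨i', j'⟩ hq' heq
      simp only [Finset.mem_coe, Finset.mem_product, hT, hFa, Finset.mem_filter] at hq hq'
      obtain ⟨⟨hiM, hiT⟩, hjM, hjF⟩ := hq
      obtain ⟨⟨hiM', hiT'⟩, hjM', hjF'⟩ := hq'
      dsimp only at heq
      split_ifs at heq with h1 h2 h2
      · exact heq
      · -- (i,j) = (j',i')
        have e1 : i = j' := congrArg Prod.fst heq
        have e2 : j = i' := congrArg Prod.snd heq
        rw [e1] at hiT; rw [hiT] at hjF'; exact absurd hjF' (by simp)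
      · have e1 : j = i' := congrArg Prod.fst heq
        have e2 : i = j' := congrArg Prod.snd heq
        rw [e2] at hiT; rw [hiT] at hjF'; exact absurd hjF' (by simp)
      · have e1 : j = j' := congrArg Prod.fst heq
        have e2 : i = i' := congrArg Prod.snd heq
        rw [e1, e2]
  have hWcard : W.card ≤ ∑ c ∈ range M, ((c / n) * (2*r) + (c % n) * (2*s)) := by
    have hWsub : W ⊆ (range M).biUnion (fun c =>
        (((range M).filter (fun i => i + c < M ∧ σ i ≠ σ (i+c))).image (fun i => (i, i + c)))) := by
      rintro ⟨i, j⟩ hij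
      simp only [hW, Finset.mem_filter, Finset.mem_product, Finset.mem_range] at hij
      obtain ⟨⟨hiM, hjM⟩, hlt, hnei⟩ := hij
      simp only [Finset.mem_biUnion]
      refine ⟨j - i, Finset.mem_range.mpr (by omega), ?_⟩
      apply Finset.mem_image.mpr
      refine ⟨i, ?_, ?_⟩
      · simp only [Finset.mem_filter, Finset.mem_range]
        have hji : i + (j - i) = j := by omega
        rw [hji]
        exact ⟨hiM, hjM, hnei⟩
      · have hji : i + (j - i) = j := by omega
        rw [hji]
    calc W.card ≤ _ := Finset.card_le_card hWsub
    _ ≤ ∑ c ∈ range M, (((range M).filter (fun i => i + c < M ∧ σ i ≠ σ (i+c))).image (fun i => (i, i + c))).card :=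
        Finset.card_biUnion_le
    _ ≤ ∑ c ∈ range M, ((c / n) * (2*r) + (c % n) * (2*s)) := by
        apply Finset.sum_le_sum
        intro c _
        calc (((range M).filter (fun i => i + c < M ∧ σ i ≠ σ (i+c))).image (fun i => (i, i + c))).card
            ≤ ((range M).filter (fun i => i + c < M ∧ σ i ≠ σ (i+c))).card := Finset.card_image_le
        _ ≤ (c / n) * (2*r) + (c % n) * (2*s) :=
            hDc (c / n) (c % n) c (by rw [Nat.mul_comm]; exact (Nat.div_add_mod c n).symm) (Nat.mod_lt c hn)
  -- arithmetic
  have hsum2 : ∑ c ∈ range M, (c % n) * (2*s) ≤ M * (n * (2*s)) := by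
    calc ∑ c ∈ range M, (c % n) * (2*s) ≤ ∑ _c ∈ range M, n * (2*s) := by
          apply Finset.sum_le_sum
          intro c _
          exact Nat.mul_le_mul_right _ (le_of_lt (Nat.mod_lt c hn))
    _ = M * (n * (2*s)) := by rw [Finset.sum_const, Finset.card_range, smul_eq_mul]
  have hsum1 : 8 * ∑ c ∈ range M, (c / n) * (2*r) ≤ M * M := by
    have h1 : ∀ c : ℕ, 8 * ((c / n) * (2*r)) ≤ 2 * c := by
      intro c
      have h2 : c / n * n ≤ c := Nat.div_mul_le_self c n
      have h3 : 8 * ((c/n) * (2*r)) = (c/n) * (8 * (2 * r)) := by ring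
      have h4 : (c/n) * (8 * (2*r)) ≤ (c/n) * (2*n) := Nat.mul_le_mul_left _ (by omega)
      have h5 : (c/n) * (2*n) = 2 * ((c/n) * n) := by ring
      omega
    have hgauss : 2 * (∑ c ∈ range M, c) = M * (M - 1) := by
      rw [Nat.mul_comm]
      exact Finset.sum_range_id_mul_two M
    calc 8 * ∑ c ∈ range M, (c / n) * (2*r) = ∑ c ∈ range M, 8 * ((c/n) * (2*r)) := Finset.mul_sum _ _ _
    _ ≤ ∑ c ∈ range M, 2 * c := Finset.sum_le_sum (fun c _ => h1 c)
    _ = 2 * ∑ c ∈ range M, c := (Finset.mul_sum _ _ _).symm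
    _ = M * (M - 1) := hgauss
    _ ≤ M * M := Nat.mul_le_mul_left M (Nat.sub_le M 1)
  -- combine
  set a := T.card with ha'
  set b := Fa.card with hb'
  have hsq : M * M ≤ 4 * (a * b) + 1 := by
    have hcase : b = a ∨ b = a + 1 := by omega
    rcases hcase with h | h
    · have hM2 : M = a + a := by omega
      have : (a + a) * (a + a) = 4 * (a * a) := by ring
      rw [hM2, h]
      omega
    · have hM2 : M = a + a + 1 := by omega
      have : (a + a + 1) * (a + a + 1) = 4 * (a * (a+1)) + 1 := by ring
      rw [hM2, h]
      omega
  have h9 : 8 * W.card ≤ M * M + 16 * s * n * M := by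
    have h10 : 8 * W.card ≤ 8 * ∑ c ∈ range M, ((c / n) * (2*r) + (c % n) * (2*s)) :=
      Nat.mul_le_mul_left 8 hWcard
    have hsplit : ∑ c ∈ range M, ((c / n) * (2*r) + (c % n) * (2*s))
        = (∑ c ∈ range M, (c / n) * (2*r)) + ∑ c ∈ range M, (c % n) * (2*s) :=
      Finset.sum_add_distrib
    have h11 : 8 * (M * (n * (2*s))) = 16 * s * n * M := by ring
    calc 8 * W.card ≤ 8 * ((∑ c ∈ range M, (c / n) * (2*r)) + ∑ c ∈ range M, (c % n) * (2*s)) := by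
          rw [← hsplit]; exact h10
    _ = 8 * (∑ c ∈ range M, (c / n) * (2*r)) + 8 * ∑ c ∈ range M, (c % n) * (2*s) := by ring
    _ ≤ M * M + 8 * (M * (n * (2*s))) := by
          have := Nat.mul_le_mul_left 8 hsum2
          omega
    _ = M * M + 16 * s * n * M := by rw [h11]
  have hfin1 : 8 * (a * b) ≤ M * M + 16 * s * n * M := le_trans (Nat.mul_le_mul_left 8 hlow) h9
  -- M*M ≤ 4ab+1 and 8ab ≤ MM + 16snM  ⇒  MM ≤ 16snM + 2
  have hfin2 : M * M ≤ 16 * s * n * M + 2 := by omega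
  have hfin3 : (16 * s * n + 3) * M ≤ M * M := Nat.mul_le_mul_right M (by omega)
  have hfin4 : (16 * s * n + 3) * M = 16 * s * n * M + 3 * M := by ring
  omega

/-- every infinitely divisible element of `Bd(ℤ)` is torsion,
where divisibility is within `Bd(ℤ)`. -/
theorem bdZ_infinitely_divisible_torsion (g : Equiv.Perm ℤ)
    (hg : ∃ r : ℕ, ∀ x : ℤ, dist x (g x) ≤ (r : ℝ))
    (hdiv : {n : ℕ | 0 < n ∧ ∃ h : Equiv.Perm ℤ,
      (∃ r : ℕ, ∀ x : ℤ, dist x (h x) ≤ (r : ℝ)) ∧ h ^ n = g}.Infinite) :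
    IsOfFinOrder g := by
  classical
  obtain ⟨r, hr⟩ := hg
  obtain ⟨n, hnmem, hnr⟩ : ∃ n ∈ {n : ℕ | 0 < n ∧ ∃ h : Equiv.Perm ℤ,
      (∃ r : ℕ, ∀ x : ℤ, dist x (h x) ≤ (r : ℝ)) ∧ h ^ n = g}, 8 * r < n := by
    by_contra hc
    push_neg at hc
    exact hdiv ((Set.finite_Iic (8*r)).subset (fun x hx => hc x hx))
  obtain ⟨hn0, h, ⟨s, hs⟩, hroot⟩ := hnmem
  have distAbs : ∀ (f : Equiv.Perm ℤ) (t : ℕ), (∀ x : ℤ, dist x (f x) ≤ (t : ℝ)) →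
      ∀ x : ℤ, (x - f x).natAbs ≤ t := by
    intro f t hf x
    have h1 := hf x
    rw [Int.dist_eq] at h1
    have h2 : |(x : ℝ) - (f x : ℝ)| = ((x - f x).natAbs : ℝ) := by
      rw [← Int.cast_sub, ← Int.cast_abs, Int.abs_eq_natAbs, Int.cast_natCast]
    rw [h2] at h1
    exact_mod_cast h1
  have hrZ : ∀ x : ℤ, (x - g x).natAbs ≤ r := distAbs g r hr
  have hsZ : ∀ x : ℤ, (x - h x).natAbs ≤ s := distAbs h s hs
  set K := 16 * s * n + 3 with hK
  have horb : ∀ x₀ : ℤ, ∃ d, 0 < d ∧ d ≤ K ∧ (h ^ d) x₀ = x₀ := by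
    intro x₀
    set p : ℕ → ℤ := fun i => (h ^ i) x₀ with hp
    have hps : ∀ i, (p (i+1) - p i).natAbs ≤ s := by
      intro i
      have e : p (i+1) = h (p i) := by
        rw [hp]
        simp only [pow_succ']
        rfl
      rw [e]
      have h2 : h (p i) - p i = -(p i - h (p i)) := by ring
      rw [h2, Int.natAbs_neg]
      exact hsZ (p i)
    have hpn : ∀ i, (p (i+n) - p i).natAbs ≤ r := by
      intro i
      have e : p (i+n) = g (p i) := by
        rw [hp]
        simp only [Nat.add_comm i n, pow_add, ← hroot]
        rfl
      rw [e]
      have h2 : g (p i) - p i = -(p i - g (p i)) := by ring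
      rw [h2, Int.natAbs_neg]
      exact hrZ (p i)
    by_cases hinj : ∀ i j, i < K → j < K → p i = p j → i = j
    · exfalso
      have hcore := core p K n r s hn0 (le_of_lt hnr) hinj hps hpn
      omega
    · push_neg at hinj
      obtain ⟨i, j, hiK, hjK, hpij, hij⟩ := hinj
      have key : ∀ i j : ℕ, i < j → j < K → p i = p j → ∃ d, 0 < d ∧ d ≤ K ∧ (h ^ d) x₀ = x₀ := by
        intro i j hlt hjK hpij
        refine ⟨j - i, by omega, by omega, ?_⟩
        have e : (h ^ i) ((h ^ (j-i)) x₀) = (h ^ i) x₀ := by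
          rw [← Equiv.Perm.mul_apply, ← pow_add]
          have hji : i + (j - i) = j := by omega
          rw [hji]
          exact hpij.symm
        exact (h ^ i).injective e
      rcases Nat.lt_or_ge i j with hlt | hge
      · exact key i j hlt hjK hpij
      · have hlt : j < i := by omega
        exact key j i hlt hiK hpij.symm
  have hfix : ∀ x₀ : ℤ, (g ^ (Nat.factorial K)) x₀ = x₀ := by
    intro x₀
    obtain ⟨d, hd0, hdK, hdfix⟩ := horb x₀
    have hfixpow : ∀ t', ((h ^ d) ^ t') x₀ = x₀ := by
      intro t'
      induction t' with
      | zero => simp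
      | succ u ihu =>
        rw [pow_succ, Equiv.Perm.mul_apply, hdfix]
        exact ihu
    have hdvd : d ∣ n * Nat.factorial K := dvd_mul_of_dvd_right (Nat.dvd_factorial hd0 hdK) n
    obtain ⟨t, ht⟩ := hdvd
    calc (g ^ Nat.factorial K) x₀ = (h ^ (n * Nat.factorial K)) x₀ := by rw [← hroot, ← pow_mul]
    _ = ((h ^ d) ^ t) x₀ := by rw [ht, pow_mul]
    _ = x₀ := hfixpow t
  have hpow : g ^ (Nat.factorial K) = 1 := Equiv.ext fun x => by
    rw [hfix x]; rfl
  exact isOfFinOrder_iff_pow_eq_one.mpr ⟨Nat.factorial K, Nat.factorial_pos K, hpow⟩
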